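/- arXiv:0908.4540 — 4 statements merged into one kernel-verified Lean document; each statement's English description precedes it below -/
import Mathlib

section
/- Let (a_k)_{k≥1} be a strictly increasing integer sequence with a_1 = 1 such that a_{m+1} − a_m → ∞ and (a_{m+1} − a_m)² / ∑_{k=2}^m (a_k − a_{k−1})² → 0 as m → ∞. Then lim_{m→∞} v_{a_{m+1}}/v_{a_m} = 1; consequently, writing m_n for the index with a_{m_n} ≤ n < a_{m_n+1}, one has v_n / v_{a_{m_n}} → 1 as n → ∞. -/
open Filter

/-- **Equation (30) of Wu (2009)**: if the strictly increasing integer sequence `(a_k)` with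
`a_1 = 1` satisfies `a_{m+1} - a_m → ∞` and
`(a_{m+1} - a_m)² / ∑_{k=2}^m (a_k - a_{k-1})² → 0`, then `v_{a_{m+1}} / v_{a_m} → 1` and,
for the index `m_n` with `a_{m_n} ≤ n < a_{m_n + 1}`, `v_n / v_{a_{m_n}} → 1`. -/
theorem vn_ratio_tendsto_one
    (a : ℕ → ℕ) (ha1 : a 1 = 1) (hamono : ∀ k, 1 ≤ k → a k < a (k + 1))
    (hgap : Tendsto (fun m => a (m + 1) - a m) atTop atTop)
    (hratio : Tendsto
      (fun m => ((a (m + 1) : ℝ) - a m) ^ 2 /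
        ∑ k ∈ Finset.Icc 2 m, ((a k : ℝ) - a (k - 1)) ^ 2) atTop (nhds 0))
    (t : ℕ → ℕ) (ht : ∀ k, 1 ≤ k → ∀ i, a k ≤ i → i < a (k + 1) → t i = a k)
    (v : ℕ → ℕ) (hv : ∀ n, v n = ∑ i ∈ Finset.Icc 1 n, (i - t i + 1))
    -- m_n is the index with a_{m_n} ≤ n < a_{m_n + 1}
    (mn : ℕ → ℕ) (hmn : ∀ n, 1 ≤ n → 1 ≤ mn n ∧ a (mn n) ≤ n ∧ n < a (mn n + 1)) :
    Tendsto (fun m => (v (a (m + 1)) : ℝ) / v (a m)) atTop (nhds 1) ∧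
      Tendsto (fun n => (v n : ℝ) / v (a (mn n))) atTop (nhds 1) := by
  clear hgap
  -- monotonicity of a on [1, ∞)
  have hA : ∀ j k, 1 ≤ j → j ≤ k → a j ≤ a k := by
    intro j k hj hjk
    induction k with
    | zero => omega
    | succ k ih =>
      rcases Nat.lt_succ_iff_lt_or_eq.mp (Nat.lt_succ_of_le hjk) with h | h
      · exact le_trans (ih (by omega)) (le_of_lt (hamono k (by omega)))
      · exact le_of_eq (by rw [h])
  have ha_pos : ∀ k, 1 ≤ k → 1 ≤ a k := by
    intro k hk
    have := hA 1 k le_rfl hk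
    omega
  -- monotonicity of v
  have hvmono : Monotone v := by
    intro x y hxy
    rw [hv, hv]
    exact Finset.sum_le_sum_of_subset (Finset.Icc_subset_Icc_right hxy)
  have hv1 : v 1 = 1 := by
    have ht1 : t 1 = 1 := by
      have h := ht 1 le_rfl 1 ha1.le (by have := hamono 1 le_rfl; omega)
      rw [h, ha1]
    rw [hv]
    simp [ht1]
  -- the gaps
  set d : ℕ → ℕ := fun k => a (k + 1) - a k with hd_def
  have hd_pos : ∀ k, 1 ≤ k → 1 ≤ d k := by
    intro k hk
    have := hamono k hk
    simp only [hd_def]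
    omega
  have had : ∀ k, 1 ≤ k → a (k + 1) = a k + d k := by
    intro k hk
    have := hamono k hk
    simp only [hd_def]
    omega
  -- triangular numbers
  set S : ℕ → ℕ := fun n => ∑ j ∈ Finset.Icc 1 n, j with hS_def
  have hS_succ : ∀ n, S (n + 1) = S n + (n + 1) := by
    intro n
    simp only [hS_def]
    exact Finset.sum_Icc_succ_top (by omega) _
  have hS_gauss : ∀ n, 2 * S n = n * (n + 1) := by
    intro n
    induction n with
    | zero => simp [hS_def]
    | succ n ih => rw [hS_succ n, Nat.mul_add, ih]; ring
  have hS_ub : ∀ n, 1 ≤ n → S n ≤ n * n := by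
    intro n hn
    have := hS_gauss n
    nlinarith
  have hS_lb : ∀ n, n * n ≤ 2 * S n := by
    intro n
    have := hS_gauss n
    nlinarith
  have hIccIoc : ∀ n : ℕ, Finset.Icc 1 n = Finset.Ioc 0 n := fun n => Finset.Icc_add_one_left_eq_Ioc 0 n
  -- step formula : v (a (m+1)) = v (a m) + S (d m) for m ≥ 1
  have hstep : ∀ m, 1 ≤ m → v (a (m + 1)) = v (a m) + S (d m) := by
    intro m hm
    have hle : a m ≤ a (m + 1) := le_of_lt (hamono m hm)
    have hsplit : v (a m) + (∑ i ∈ Finset.Ioc (a m) (a (m + 1)), (i - t i + 1))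
        = v (a (m + 1)) := by
      rw [hv, hv, hIccIoc, hIccIoc]
      exact Finset.sum_Ioc_consecutive _ (Nat.zero_le _) hle
    rw [← hsplit]
    congr 1
    -- compute the block sum
    have hIoc : Finset.Ioc (a m) (a (m + 1)) =
        Finset.map (addLeftEmbedding (a m)) (Finset.Icc 1 (d m)) := by
      rw [Finset.map_add_left_Icc, ← Finset.Icc_add_one_left_eq_Ioc]
      congr 1
      exact had m hm
    rw [hIoc, Finset.sum_map]
    have hd1 : 1 ≤ d m := hd_pos m hm
    obtain ⟨e, he⟩ : ∃ e, d m = e + 1 := ⟨d m - 1, by omega⟩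
    rw [he, Finset.sum_Icc_succ_top (by omega : 1 ≤ e + 1)]
    have hint : ∑ j ∈ Finset.Icc 1 e,
        ((addLeftEmbedding (a m)) j - t ((addLeftEmbedding (a m)) j) + 1) = S e + e := by
      have hterm : ∀ j ∈ Finset.Icc 1 e,
          (addLeftEmbedding (a m)) j - t ((addLeftEmbedding (a m)) j) + 1 = j + 1 := by
        intro j hj
        simp only [Finset.mem_Icc] at hj
        have hEmb : (addLeftEmbedding (a m)) j = a m + j := rfl
        have htj : t (a m + j) = a m := by
          apply ht m hm
          · omega
          · rw [had m hm, he]; omega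
        rw [hEmb, htj]
        omega
      rw [Finset.sum_congr rfl hterm, Finset.sum_add_distrib, Finset.sum_const,
        Nat.card_Icc]
      simp only [hS_def, smul_eq_mul]
      omega
    have hlast : (addLeftEmbedding (a m)) (e + 1) - t ((addLeftEmbedding (a m)) (e + 1)) + 1
        = 1 := by
      have hEmb : (addLeftEmbedding (a m)) (e + 1) = a m + (e + 1) := rfl
      have hlast' : a m + (e + 1) = a (m + 1) := by rw [had m hm, he]
      have htlast : t (a m + (e + 1)) = a (m + 1) := by
        rw [hlast']
        exact ht (m + 1) (by omega) _ le_rfl (hamono (m + 1) (by omega))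
      rw [hEmb, htlast, hlast']
      omega
    rw [hint, hlast, hS_succ e]
    omega
  -- closed formula
  have hF : ∀ m, v (a (m + 1)) = 1 + ∑ k ∈ Finset.Icc 1 m, S (d k) := by
    intro m
    induction m with
    | zero => simpa [ha1] using hv1
    | succ m ih =>
      rw [hstep (m + 1) (by omega), ih, Finset.sum_Icc_succ_top (by omega : 1 ≤ m + 1)]
      omega
  -- cast of gap
  have hcast : ∀ k, 1 ≤ k → ((a (k + 1) : ℝ) - a k) = (d k : ℝ) := by
    intro k hk
    have h : a k ≤ a (k + 1) := le_of_lt (hamono k hk)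
    simp only [hd_def]
    push_cast [Nat.cast_sub h]
    ring
  -- the shifted ratio tends to 0
  have hratio' : Tendsto
      (fun m => ((d (m + 1) : ℝ)) ^ 2 / ∑ k ∈ Finset.Icc 1 m, ((d k : ℝ)) ^ 2)
      atTop (nhds 0) := by
    have h1 : Tendsto
        (fun m => ((a (m + 1 + 1) : ℝ) - a (m + 1)) ^ 2 /
          ∑ k ∈ Finset.Icc 2 (m + 1), ((a k : ℝ) - a (k - 1)) ^ 2) atTop (nhds 0) :=
      (tendsto_add_atTop_iff_nat 1).mpr hratio
    refine Tendsto.congr (fun m => ?_) h1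
    rw [hcast (m + 1) (by omega)]
    congr 1
    have hmap : Finset.Icc 2 (m + 1) = Finset.map (addLeftEmbedding 1) (Finset.Icc 1 m) := by
      rw [Finset.map_add_left_Icc, Nat.add_comm 1 m]
    rw [hmap, Finset.sum_map]
    apply Finset.sum_congr rfl
    intro k hk
    simp only [Finset.mem_Icc] at hk
    have hEmb : (addLeftEmbedding 1) k = 1 + k := rfl
    rw [hEmb]
    have h1k : 1 + k = k + 1 := by ring
    rw [h1k, show k + 1 - 1 = k from rfl, hcast k (by omega)]
  -- positivity and bounds
  have hv_pos : ∀ n, 1 ≤ n → (1 : ℝ) ≤ v n := by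
    intro n hn
    have := hvmono (show 1 ≤ n from hn)
    rw [hv1] at this
    exact_mod_cast this
  have hSum_pos : ∀ m, 1 ≤ m → (0 : ℝ) < ∑ k ∈ Finset.Icc 1 m, ((d k : ℝ)) ^ 2 := by
    intro m hm
    have h1 : ((d 1 : ℝ)) ^ 2 ≤ ∑ k ∈ Finset.Icc 1 m, ((d k : ℝ)) ^ 2 := by
      apply Finset.single_le_sum (f := fun k => ((d k : ℝ)) ^ 2)
      · intro i _; positivity
      · simp [Finset.mem_Icc]; omega
    have h2 : (1 : ℝ) ≤ ((d 1 : ℝ)) ^ 2 := by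
      have h3 := hd_pos 1 le_rfl
      have h4 : (1 : ℝ) ≤ (d 1 : ℝ) := by exact_mod_cast h3
      nlinarith
    linarith
  have hv_lb : ∀ m, (∑ k ∈ Finset.Icc 1 m, ((d k : ℝ)) ^ 2) / 2 ≤ (v (a (m + 1)) : ℝ) := by
    intro m
    rw [hF m]
    push_cast
    have h1 : ∑ k ∈ Finset.Icc 1 m, ((d k : ℝ)) ^ 2 ≤
        ∑ k ∈ Finset.Icc 1 m, 2 * (S (d k) : ℝ) := by
      apply Finset.sum_le_sum
      intro k _
      have h2 := hS_lb (d k)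
      have h3 : ((d k * d k : ℕ) : ℝ) ≤ ((2 * S (d k) : ℕ) : ℝ) := by exact_mod_cast h2
      push_cast at h3
      nlinarith
    rw [← Finset.mul_sum] at h1
    have h2 : (0 : ℝ) ≤ ∑ k ∈ Finset.Icc 1 m, (S (d k) : ℝ) := by
      apply Finset.sum_nonneg; intro k _; positivity
    linarith
  -- main squeeze for part 1 (shifted by one)
  have hg : Tendsto (fun m => (v (a (m + 1 + 1)) : ℝ) / v (a (m + 1))) atTop (nhds 1) := by
    have hub : ∀ m, 1 ≤ m → (v (a (m + 1 + 1)) : ℝ) / v (a (m + 1)) ≤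
        1 + 2 * (((d (m + 1) : ℝ)) ^ 2 / ∑ k ∈ Finset.Icc 1 m, ((d k : ℝ)) ^ 2) := by
      intro m hm
      have hvpos : (0 : ℝ) < v (a (m + 1)) := by
        have := hv_pos (a (m + 1)) (ha_pos (m + 1) (by omega))
        linarith
      have hstep' : (v (a (m + 1 + 1)) : ℝ) = v (a (m + 1)) + S (d (m + 1)) := by
        have := hstep (m + 1) (by omega)
        exact_mod_cast this
      rw [hstep', add_div, div_self (ne_of_gt hvpos)]
      have hSpos : (0 : ℝ) < ∑ k ∈ Finset.Icc 1 m, ((d k : ℝ)) ^ 2 := hSum_pos m hm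
      have hnum : (S (d (m + 1)) : ℝ) ≤ ((d (m + 1) : ℝ)) ^ 2 := by
        have h2 := hS_ub (d (m + 1)) (hd_pos (m + 1) (by omega))
        have h3 : ((S (d (m + 1)) : ℕ) : ℝ) ≤ ((d (m + 1) * d (m + 1) : ℕ) : ℝ) := by
          exact_mod_cast h2
        push_cast at h3
        nlinarith
      have hkey : (S (d (m + 1)) : ℝ) / v (a (m + 1)) ≤
          ((d (m + 1) : ℝ)) ^ 2 / ((∑ k ∈ Finset.Icc 1 m, ((d k : ℝ)) ^ 2) / 2) :=
        div_le_div₀ (by positivity) hnum (by positivity) (hv_lb m)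
      have heq : ((d (m + 1) : ℝ)) ^ 2 / ((∑ k ∈ Finset.Icc 1 m, ((d k : ℝ)) ^ 2) / 2) =
          2 * (((d (m + 1) : ℝ)) ^ 2 / ∑ k ∈ Finset.Icc 1 m, ((d k : ℝ)) ^ 2) := by
        field_simp
      rw [heq] at hkey
      linarith
    have hlb : ∀ m, 1 ≤ m → (1 : ℝ) ≤ (v (a (m + 1 + 1)) : ℝ) / v (a (m + 1)) := by
      intro m hm
      have hvpos : (0 : ℝ) < v (a (m + 1)) := by
        have := hv_pos (a (m + 1)) (ha_pos (m + 1) (by omega))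
        linarith
      rw [one_le_div hvpos]
      have h : a (m + 1) ≤ a (m + 1 + 1) := le_of_lt (hamono (m + 1) (by omega))
      exact_mod_cast hvmono h
    have hupper : Tendsto (fun m => 1 + 2 * (((d (m + 1) : ℝ)) ^ 2 /
        ∑ k ∈ Finset.Icc 1 m, ((d k : ℝ)) ^ 2)) atTop (nhds 1) := by
      have h := (tendsto_const_nhds (x := (1:ℝ)) (f := atTop)).add (hratio'.const_mul 2)
      simpa using h
    apply tendsto_of_tendsto_of_tendsto_of_le_of_le' tendsto_const_nhds hupper
    · filter_upwards [eventually_ge_atTop 1] with m hm using hlb m hm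
    · filter_upwards [eventually_ge_atTop 1] with m hm using hub m hm
  have part1 : Tendsto (fun m => (v (a (m + 1)) : ℝ) / v (a m)) atTop (nhds 1) :=
    (tendsto_add_atTop_iff_nat 1).mp hg
  refine ⟨part1, ?_⟩
  -- part 2
  have hmn_top : Tendsto mn atTop atTop := by
    rw [tendsto_atTop_atTop]
    intro M
    refine ⟨a (M + 1), fun n hn => ?_⟩
    have hn1 : 1 ≤ n := le_trans (ha_pos (M + 1) (by omega)) hn
    obtain ⟨h1, h2, h3⟩ := hmn n hn1
    by_contra hcon
    push_neg at hcon
    have h4 : a (mn n + 1) ≤ a (M + 1) := hA (mn n + 1) (M + 1) (by omega) (by omega)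
    omega
  have hcomp : Tendsto (fun n => (v (a (mn n + 1)) : ℝ) / v (a (mn n))) atTop (nhds 1) :=
    part1.comp hmn_top
  apply tendsto_of_tendsto_of_tendsto_of_le_of_le' tendsto_const_nhds hcomp
  · filter_upwards [eventually_ge_atTop 1] with n hn
    obtain ⟨h1, h2, h3⟩ := hmn n hn
    have hvpos : (0 : ℝ) < v (a (mn n)) := by
      have := hv_pos (a (mn n)) (ha_pos (mn n) h1)
      linarith
    rw [one_le_div hvpos]
    exact_mod_cast hvmono h2
  · filter_upwards [eventually_ge_atTop 1] with n hn
    obtain ⟨h1, h2, h3⟩ := hmn n hn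
    have hvpos : (0 : ℝ) < v (a (mn n)) := by
      have := hv_pos (a (mn n)) (ha_pos (mn n) h1)
      linarith
    have hnum : (v n : ℝ) ≤ v (a (mn n + 1)) := by
      exact_mod_cast hvmono (le_of_lt h3)
    gcongr
end

section
/- Let (a_k)_{k≥1} be a strictly increasing integer sequence with a_1 = 1 such that a_{k+1} − a_k → ∞ as k → ∞. Then for every fixed k_0 ∈ ℕ, #{i ≤ n : i − t_i + 1 ≤ k_0} / v_n → 0 as n → ∞. -/
open Filter

/-- **Equation (31) of Wu (2009)**: if the strictly increasing integer sequence `(a_k)` with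
`a_1 = 1` satisfies `a_{k+1} - a_k → ∞`, then for every fixed `k₀`,
`#{i ≤ n : i - t_i + 1 ≤ k₀} / v_n → 0`. -/
theorem small_block_count_negligible
    (a : ℕ → ℕ) (ha1 : a 1 = 1) (hamono : ∀ k, 1 ≤ k → a k < a (k + 1))
    (hgap : Tendsto (fun k => a (k + 1) - a k) atTop atTop)
    (t : ℕ → ℕ) (ht : ∀ k, 1 ≤ k → ∀ i, a k ≤ i → i < a (k + 1) → t i = a k)
    (v : ℕ → ℕ) (hv : ∀ n, v n = ∑ i ∈ Finset.Icc 1 n, (i - t i + 1)) :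
    ∀ k₀ : ℕ, Tendsto
      (fun n => (((Finset.Icc 1 n).filter fun i => i - t i + 1 ≤ k₀).card : ℝ) / v n)
      atTop (nhds 0) := by
  intro k₀
  -- `a k ≥ k` for `k ≥ 1`
  have hak : ∀ k, 1 ≤ k → k ≤ a k := by
    intro k hk
    induction k with
    | zero => omega
    | succ m ih =>
      rcases Nat.lt_or_ge 1 (m + 1) with h | h
      · have hm : 1 ≤ m := by omega
        have h1 := hamono m hm
        have h2 := ih hm
        omega
      · have hm0 : m = 0 := by omega
        subst hm0
        simpa using ha1.ge
  set K : ℕ → ℕ := fun n => Nat.findGreatest (fun k => a k ≤ n) n with hKdef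
  have hK1 : ∀ n, 1 ≤ n → 1 ≤ K n := by
    intro n hn
    exact Nat.le_findGreatest hn (by simpa [ha1] using hn)
  have hKa : ∀ n, 1 ≤ n → a (K n) ≤ n := by
    intro n hn
    exact Nat.findGreatest_spec (P := fun k => a k ≤ n) hn (by simpa [ha1] using hn)
  have hKub : ∀ n, 1 ≤ n → n < a (K n + 1) := by
    intro n hn
    rcases Nat.lt_or_ge n (K n + 1) with h | h
    · have := hak (K n + 1) (by omega)
      omega
    · have h2 : ¬ a (K n + 1) ≤ n :=
        Nat.findGreatest_is_greatest (P := fun k => a k ≤ n) (n := n)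
          (by simp only [hKdef]; omega) h
      omega
  have hKmono : ∀ i n, i ≤ n → 1 ≤ i → K i ≤ K n := by
    intro i n hin hi
    exact Nat.le_findGreatest (le_trans (Nat.findGreatest_le i) hin)
      (le_trans (hKa i hi) hin)
  have hKtop : Tendsto K atTop atTop := by
    rw [tendsto_atTop_atTop]
    intro b
    refine ⟨max (a b) b, fun n hn => ?_⟩
    exact Nat.le_findGreatest (le_trans (le_max_right _ _) hn)
      (le_trans (le_max_left _ _) hn)
  -- growth: for every `C` eventually `C * k ≤ a k`
  have hgrow : ∀ C : ℕ, ∃ N, ∀ k, N ≤ k → C * k ≤ a k := by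
    intro C
    obtain ⟨M₀, hM₀⟩ := (tendsto_atTop_atTop.mp hgap) (2 * C)
    set M := max M₀ 1 with hM
    have hstep : ∀ k, M ≤ k → 2 * C ≤ a (k + 1) - a k := fun k hk =>
      hM₀ k (le_trans (le_max_left _ _) hk)
    have hind : ∀ k, M ≤ k → a M + 2 * C * (k - M) ≤ a k := by
      intro k hk
      induction k, hk using Nat.le_induction with
      | base => simp
      | succ m hm ih =>
        have h1 := hstep m hm
        have h2 := hamono m (le_trans (le_max_right _ _) hm)
        have h3 : 2 * C * (m + 1 - M) = 2 * C * (m - M) + 2 * C := by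
          rw [show m + 1 - M = (m - M) + 1 by omega]; ring
        omega
    refine ⟨2 * M, fun k hk => ?_⟩
    have h1 := hind k (by omega)
    have h2 : C * k ≤ 2 * C * (k - M) := by
      have : k ≤ 2 * (k - M) := by omega
      calc C * k ≤ C * (2 * (k - M)) := Nat.mul_le_mul_left _ this
        _ = 2 * C * (k - M) := by ring
    omega
  -- `(a k : ℝ) / k → ∞`
  have htop : Tendsto (fun k => (a k : ℝ) / k) atTop atTop := by
    rw [tendsto_atTop]
    intro b
    obtain ⟨N, hN⟩ := hgrow ⌈b⌉₊
    filter_upwards [eventually_ge_atTop (max N 1)] with k hk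
    have hk1 : (1 : ℝ) ≤ k := by exact_mod_cast le_trans (le_max_right N 1) hk
    have hkpos : (0 : ℝ) < k := by linarith
    have h1 : ((⌈b⌉₊ : ℝ)) * k ≤ a k := by
      exact_mod_cast hN k (le_trans (le_max_left N 1) hk)
    calc b ≤ (⌈b⌉₊ : ℝ) := Nat.le_ceil b
      _ ≤ (a k : ℝ) / k := by rw [le_div_iff₀ hkpos]; exact h1
  have hzero : Tendsto (fun k : ℕ => (k₀ : ℝ) * k / a k) atTop (nhds 0) := by
    have h1 : Tendsto (fun k : ℕ => ((a k : ℝ) / k)⁻¹) atTop (nhds 0) :=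
      tendsto_inv_atTop_zero.comp htop
    have h2 : Tendsto (fun k : ℕ => (k : ℝ) / a k) atTop (nhds 0) := by
      simpa [inv_div] using h1
    have h3 := h2.const_mul (k₀ : ℝ)
    simpa [mul_div_assoc, mul_zero] using h3
  have hcomp : Tendsto (fun n => (k₀ : ℝ) * (K n) / a (K n)) atTop (nhds 0) :=
    hzero.comp hKtop
  refine tendsto_of_tendsto_of_tendsto_of_le_of_le' tendsto_const_nhds hcomp
    (Eventually.of_forall fun n => by positivity) ?_
  filter_upwards [eventually_ge_atTop 1] with n hn
  -- count bound
  have hsub : (Finset.Icc 1 n).filter (fun i => i - t i + 1 ≤ k₀) ⊆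
      (Finset.Icc 1 (K n)).biUnion (fun k => Finset.Ico (a k) (a k + k₀)) := by
    intro i hi
    simp only [Finset.mem_filter, Finset.mem_Icc] at hi
    obtain ⟨⟨hi1, hi2⟩, hl⟩ := hi
    have hk1 : 1 ≤ K i := hK1 i hi1
    have hka : a (K i) ≤ i := hKa i hi1
    have hkb : i < a (K i + 1) := hKub i hi1
    have hti : t i = a (K i) := ht (K i) hk1 i hka hkb
    rw [Finset.mem_biUnion]
    refine ⟨K i, ?_, ?_⟩
    · simp only [Finset.mem_Icc]
      exact ⟨hk1, hKmono i n hi2 hi1⟩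
    · simp only [Finset.mem_Ico]
      rw [hti] at hl
      omega
  have hcard : ((Finset.Icc 1 n).filter (fun i => i - t i + 1 ≤ k₀)).card ≤ K n * k₀ := by
    calc ((Finset.Icc 1 n).filter (fun i => i - t i + 1 ≤ k₀)).card
        ≤ ((Finset.Icc 1 (K n)).biUnion (fun k => Finset.Ico (a k) (a k + k₀))).card :=
          Finset.card_le_card hsub
      _ ≤ ∑ k ∈ Finset.Icc 1 (K n), (Finset.Ico (a k) (a k + k₀)).card :=
          Finset.card_biUnion_le
      _ = ∑ k ∈ Finset.Icc 1 (K n), k₀ := by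
          refine Finset.sum_congr rfl fun k _ => ?_
          rw [Nat.card_Ico]; omega
      _ = K n * k₀ := by
          rw [Finset.sum_const, Nat.card_Icc, smul_eq_mul]
          congr 1
  -- `v n ≥ n`
  have hvn : n ≤ v n := by
    rw [hv n]
    calc n = ∑ i ∈ Finset.Icc 1 n, 1 := by
          rw [Finset.sum_const, Nat.card_Icc, smul_eq_mul]; omega
      _ ≤ ∑ i ∈ Finset.Icc 1 n, (i - t i + 1) := Finset.sum_le_sum fun i _ => by omega
  have hvKa : a (K n) ≤ v n := le_trans (hKa n hn) hvn
  have haKpos : 0 < a (K n) := lt_of_lt_of_le (hK1 n hn) (hak (K n) (hK1 n hn))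
  refine div_le_div₀ (by positivity) ?_ (by exact_mod_cast haKpos) (by exact_mod_cast hvKa)
  calc (((Finset.Icc 1 n).filter fun i => i - t i + 1 ≤ k₀).card : ℝ)
      ≤ ((K n * k₀ : ℕ) : ℝ) := by exact_mod_cast hcard
    _ = (k₀ : ℝ) * K n := by push_cast; ring
end

section
/- Let c > 0 and p > 1 be constants and a_k = ⌊c k^p⌋ for k ≥ 1, assumed strictly increasing. Then v_{a_m} ∼ m^{2p−1} c² p² / (4p − 2) as m → ∞, and for n with a_m ≤ n < a_{m+1} one has v_n ∼ v_{a_m} as n → ∞. -/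
open Filter Finset

/-! ### Auxiliary lemmas -/

private lemma wu_tel_lower {q : ℝ} (hq : 1 ≤ q) {x : ℝ} (hx : 1 ≤ x) :
    q * x ^ (q - 1) ≤ (x + 1) ^ q - x ^ q := by
  have hx0 : (0:ℝ) < x := by linarith
  have hinv : (0:ℝ) < 1/x := by positivity
  have hb : 1 + q * (1/x) ≤ (1 + 1/x) ^ q :=
    one_add_mul_self_le_rpow_one_add (by linarith) hq
  have hsplit : x + 1 = x * (1 + 1/x) := by field_simp
  have hmul : (x + 1) ^ q = x ^ q * (1 + 1/x) ^ q := by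
    rw [hsplit, Real.mul_rpow hx0.le (by positivity)]
  have hxq : (0:ℝ) < x ^ q := Real.rpow_pos_of_pos hx0 q
  have hpow : x ^ (q-1) = x ^ q / x := by
    rw [Real.rpow_sub hx0, Real.rpow_one]
  have h2 : x ^ q * (1 + q * (1/x)) ≤ (x + 1) ^ q := by
    rw [hmul]; exact mul_le_mul_of_nonneg_left hb hxq.le
  have h3 : x ^ q * (1 + q * (1/x)) = x ^ q + q * (x ^ q / x) := by
    field_simp
  rw [hpow]; linarith [h3 ▸ h2]

private lemma wu_tel_upper {q : ℝ} (hq : 1 ≤ q) {x : ℝ} (hx : 0 ≤ x) :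
    (x + 1) ^ q - x ^ q ≤ q * (x + 1) ^ (q - 1) := by
  have hx1 : (0:ℝ) < x + 1 := by linarith
  have hd1 : 1/(x+1) ≤ 1 := by rw [div_le_one hx1]; linarith
  have hb : 1 + q * (-(1/(x+1))) ≤ (1 + (-(1/(x+1)))) ^ q :=
    one_add_mul_self_le_rpow_one_add (by linarith) hq
  have hsplit : x = (x + 1) * (1 + (-(1/(x+1)))) := by field_simp; ring
  have hmul : x ^ q = (x + 1) ^ q * (1 + (-(1/(x+1)))) ^ q := by
    rw [hsplit, Real.mul_rpow hx1.le (by linarith)]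
    rw [← hsplit]
  have hxq : (0:ℝ) < (x+1) ^ q := Real.rpow_pos_of_pos hx1 q
  have h2 : (x+1) ^ q * (1 + q * (-(1/(x+1)))) ≤ x ^ q := by
    rw [hmul]; exact mul_le_mul_of_nonneg_left hb hxq.le
  have hpow : (x+1) ^ (q-1) = (x+1) ^ q / (x+1) := by
    rw [Real.rpow_sub hx1, Real.rpow_one]
  have h3 : (x+1) ^ q * (1 + q * (-(1/(x+1)))) = (x+1) ^ q - q * ((x+1) ^ q / (x+1)) := by
    field_simp; ring
  rw [hpow]; linarith [h3 ▸ h2]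

private lemma wu_telescope (q : ℝ) {m : ℕ} (hm : 1 ≤ m) :
    ∑ k ∈ Ico 1 m, (((k:ℝ)+1) ^ q - (k:ℝ) ^ q) = (m:ℝ) ^ q - 1 := by
  rw [Finset.sum_Ico_eq_sum_range]
  have h := Finset.sum_range_sub (fun j => ((1 + j : ℕ) : ℝ) ^ q) (m - 1)
  have hc : ((1 + (m-1) : ℕ) : ℝ) = (m : ℝ) := by
    have : 1 + (m - 1) = m := by omega
    rw [this]
  simp only [Nat.cast_add, Nat.cast_one, Nat.cast_zero] at h hc
  rw [hc] at h
  rw [show ((1:ℝ)+0) = 1 by norm_num, Real.one_rpow] at h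
  rw [← h]
  apply Finset.sum_congr rfl
  intro x _
  push_cast
  ring_nf

private lemma wu_shift (r : ℝ) {m : ℕ} (hm : 1 ≤ m) :
    ∑ k ∈ Ico 1 m, ((k:ℝ)+1) ^ r = (∑ k ∈ Ico 1 m, (k:ℝ) ^ r) + (m:ℝ) ^ r - 1 := by
  have key : ∀ n : ℕ, ∑ k ∈ Ico 1 (n+1), ((k:ℝ)+1) ^ r
      = (∑ k ∈ Ico 1 (n+1), (k:ℝ) ^ r) + ((n+1:ℕ):ℝ) ^ r - 1 := by
    intro n
    induction n with
    | zero => simp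
    | succ n ih =>
      rw [Finset.sum_Ico_succ_top (by omega : 1 ≤ n+1) (fun k:ℕ => ((k:ℝ)+1)^r),
          Finset.sum_Ico_succ_top (by omega : 1 ≤ n+1) (fun k:ℕ => (k:ℝ)^r), ih]
      push_cast
      ring
  obtain ⟨n, rfl⟩ : ∃ n, m = n + 1 := ⟨m - 1, by omega⟩
  exact key n

private lemma wu_sum_upper {q : ℝ} (hq : 1 ≤ q) {m : ℕ} (hm : 1 ≤ m) :
    q * (∑ k ∈ Ico 1 m, (k:ℝ) ^ (q-1)) ≤ (m:ℝ) ^ q - 1 := by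
  rw [← wu_telescope q hm, Finset.mul_sum]
  apply Finset.sum_le_sum
  intro k hk
  have hk1 : 1 ≤ k := (Finset.mem_Ico.mp hk).1
  exact wu_tel_lower hq (by exact_mod_cast hk1)

private lemma wu_sum_lower {q : ℝ} (hq : 1 ≤ q) {m : ℕ} (hm : 1 ≤ m) :
    (m:ℝ) ^ q - 1 ≤ q * (∑ k ∈ Ico 1 m, ((k:ℝ)+1) ^ (q-1)) := by
  rw [← wu_telescope q hm, Finset.mul_sum]
  apply Finset.sum_le_sum
  intro k _
  exact wu_tel_upper hq (by positivity)

private lemma wu_pow_ratio_tendsto {s q : ℝ} (hs : s < q) :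
    Tendsto (fun m : ℕ => (m:ℝ) ^ s / (m:ℝ) ^ q) atTop (nhds 0) := by
  have h1 : Tendsto (fun x : ℝ => x ^ (-(q - s))) atTop (nhds 0) :=
    tendsto_rpow_neg_atTop (by linarith)
  have h2 := h1.comp tendsto_natCast_atTop_atTop (α := ℕ)
  refine Tendsto.congr' ?_ h2
  filter_upwards [eventually_ge_atTop 1] with m hm
  have hm0 : (0:ℝ) < m := by exact_mod_cast hm
  simp only [Function.comp_apply]
  rw [neg_sub, Real.rpow_sub hm0]

private lemma wu_sum_tendsto {q : ℝ} (hq : 1 < q) :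
    Tendsto (fun m : ℕ => (∑ k ∈ Ico 1 m, (k:ℝ) ^ (q-1)) / (m:ℝ) ^ q) atTop
      (nhds (1/q)) := by
  have hq0 : (0:ℝ) < q := by linarith
  have hlow : Tendsto (fun m : ℕ => 1/q - 1/(m:ℝ)) atTop (nhds (1/q)) := by
    have := tendsto_const_nhds (x := 1/q) (f := atTop (α := ℕ)) |>.sub
      tendsto_one_div_atTop_nhds_zero_nat
    simpa using this
  apply tendsto_of_tendsto_of_tendsto_of_le_of_le' hlow
      (tendsto_const_nhds (x := 1/q))
  · filter_upwards [eventually_ge_atTop 1] with m hm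
    have hm0 : (0:ℝ) < m := by exact_mod_cast hm
    have hmq : (0:ℝ) < (m:ℝ)^q := Real.rpow_pos_of_pos hm0 q
    have h1 := wu_sum_lower hq.le hm
    rw [wu_shift (q-1) hm] at h1
    have hdiv : (m:ℝ)^q/q ≤ (∑ k ∈ Ico 1 m, (k:ℝ) ^ (q-1)) + (m:ℝ)^(q-1) := by
      rw [div_le_iff₀ hq0]; nlinarith
    have hxq : (m:ℝ)^(q-1) = (m:ℝ)^q/(m:ℝ) := by
      rw [Real.rpow_sub hm0, Real.rpow_one]
    rw [hxq] at hdiv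
    rw [le_div_iff₀ hmq]
    have hring : (1/q - 1/(m:ℝ)) * (m:ℝ)^q = (m:ℝ)^q/q - (m:ℝ)^q/(m:ℝ) := by ring
    linarith
  · filter_upwards [eventually_ge_atTop 1] with m hm
    have hm0 : (0:ℝ) < m := by exact_mod_cast hm
    have hmq : (0:ℝ) < (m:ℝ)^q := Real.rpow_pos_of_pos hm0 q
    have h1 := wu_sum_upper hq.le hm
    rw [div_le_div_iff₀ hmq hq0]
    nlinarith

private lemma wu_sum_small {r q : ℝ} (hr : 0 ≤ r) (hq : r + 1 < q) :
    Tendsto (fun m : ℕ => (∑ k ∈ Ico 1 m, (k:ℝ) ^ r) / (m:ℝ) ^ q) atTop (nhds 0) := by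
  apply tendsto_of_tendsto_of_tendsto_of_le_of_le'
      (tendsto_const_nhds (x := (0:ℝ))) (wu_pow_ratio_tendsto hq)
  · filter_upwards [eventually_ge_atTop 1] with m hm
    have hm0 : (0:ℝ) < m := by exact_mod_cast hm
    positivity
  · filter_upwards [eventually_ge_atTop 1] with m hm
    have hm0 : (0:ℝ) < m := by exact_mod_cast hm
    have hmq : (0:ℝ) < (m:ℝ)^q := Real.rpow_pos_of_pos hm0 q
    rw [div_le_div_iff₀ hmq hmq]
    have hsum : (∑ k ∈ Ico 1 m, (k:ℝ) ^ r) ≤ (m:ℝ) ^ (r+1) := by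
      calc (∑ k ∈ Ico 1 m, (k:ℝ) ^ r) ≤ ∑ _k ∈ Ico 1 m, (m:ℝ) ^ r := by
            apply Finset.sum_le_sum
            intro k hk
            have := (Finset.mem_Ico.mp hk).2
            exact Real.rpow_le_rpow (by positivity) (by exact_mod_cast this.le) hr
        _ = ((m - 1 : ℕ):ℝ) * (m:ℝ) ^ r := by
            rw [Finset.sum_const, Nat.card_Ico]; simp
        _ ≤ (m:ℝ) * (m:ℝ) ^ r := by
            apply mul_le_mul_of_nonneg_right _ (by positivity)
            exact_mod_cast Nat.sub_le m 1
        _ = (m:ℝ) ^ (r+1) := by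
            rw [Real.rpow_add_one hm0.ne']; ring
    nlinarith [Real.rpow_pos_of_pos hm0 (r+1), Real.rpow_nonneg hm0.le r,
      Finset.sum_nonneg (fun k (_ : k ∈ Ico 1 m) => Real.rpow_nonneg (Nat.cast_nonneg k) r)]

private lemma wu_gauss (n : ℕ) : ((∑ j ∈ range n, (j + 2) : ℕ) : ℝ) = ((n:ℝ)^2 + 3*n)/2 := by
  induction n with
  | zero => simp
  | succ n ih =>
    rw [Finset.sum_range_succ]
    push_cast
    push_cast at ih
    rw [ih]
    ring

private lemma wu_block {A B : ℕ} (hAB : A < B) (t : ℕ → ℕ)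
    (htA : ∀ i, A ≤ i → i < B → t i = A) (htB : t B = B) :
    ((∑ i ∈ Ioc A B, (i - t i + 1) : ℕ) : ℝ)
      = (((B - A : ℕ):ℝ)^2 + ((B - A:ℕ):ℝ))/2 := by
  obtain ⟨C, rfl⟩ : ∃ C, B = C + 1 := ⟨B - 1, by omega⟩
  have hAC : A ≤ C := by omega
  rw [Finset.sum_Ioc_succ_top hAC]
  rw [htB, show C + 1 - (C+1) + 1 = 1 from by omega]
  have hcongr : ∑ i ∈ Ioc A C, (i - t i + 1) = ∑ i ∈ Ioc A C, (i - A + 1) := by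
    apply Finset.sum_congr rfl
    intro i hi
    obtain ⟨h1, h2⟩ := Finset.mem_Ioc.mp hi
    rw [htA i h1.le (by omega)]
  rw [hcongr, ← Finset.Ico_add_one_add_one_eq_Ioc, Finset.sum_Ico_eq_sum_range]
  have hcongr2 : ∑ j ∈ range (C + 1 - (A+1)), (A + 1 + j - A + 1)
      = ∑ j ∈ range (C - A), (j + 2) := by
    rw [show C + 1 - (A+1) = C - A from by omega]
    apply Finset.sum_congr rfl
    intro j _
    omega
  rw [hcongr2]
  push_cast [wu_gauss (C - A)]
  have h1 : ((C - A : ℕ) : ℝ) = (C:ℝ) - A := by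
    have := Nat.cast_sub hAC (R := ℝ); rw [this]
  have h2 : ((C + 1 - A : ℕ) : ℝ) = (C:ℝ) + 1 - A := by
    have := Nat.cast_sub (by omega : A ≤ C + 1) (R := ℝ); rw [this]; push_cast; ring
  rw [h1, h2]
  ring

private lemma wu_div_helper (x φ A B : ℝ) (hA : A ≠ 0) (hB : B ≠ 0) :
    x / (φ * A / B) = x / φ * (B / A) := by
  rcases eq_or_ne φ 0 with h|h
  · simp [h]
  · field_simp

set_option maxHeartbeats 1600000 in
/-- **Equation (20) of Wu (2009)**: for `a_k = ⌊c k^p⌋` (`c > 0`, `p > 1`), assumed strictly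
increasing, `v_{a_m} ∼ m^{2p-1} c² p² / (4p - 2)` as `m → ∞`, and `v_n ∼ v_{a_{m_n}}` where
`m_n` is the index with `a_{m_n} ≤ n < a_{m_n + 1}`. -/
theorem vn_asymptotics_polynomial_blocks
    (c p : ℝ) (hc : 0 < c) (hp : 1 < p)
    (a : ℕ → ℕ) (ha : ∀ k, a k = ⌊c * (k : ℝ) ^ p⌋₊)
    (hamono : ∀ k, 1 ≤ k → a k < a (k + 1))
    (t : ℕ → ℕ) (ht : ∀ k, 1 ≤ k → ∀ i, a k ≤ i → i < a (k + 1) → t i = a k)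
    (v : ℕ → ℕ) (hv : ∀ n, v n = ∑ i ∈ Finset.Icc 1 n, (i - t i + 1))
    -- m_n is the index with a_{m_n} ≤ n < a_{m_n + 1}
    (mn : ℕ → ℕ) (hmn : ∀ n, a 1 ≤ n → 1 ≤ mn n ∧ a (mn n) ≤ n ∧ n < a (mn n + 1)) :
    Tendsto
      (fun m => (v (a m) : ℝ) / ((m : ℝ) ^ (2 * p - 1) * c ^ 2 * p ^ 2 / (4 * p - 2)))
      atTop (nhds 1) ∧
    Tendsto (fun n => (v n : ℝ) / v (a (mn n))) atTop (nhds 1) := by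
  have hp0 : (0:ℝ) < p := by linarith
  set q : ℝ := 2 * p - 1 with hqdef
  have hq1 : (1:ℝ) < q := by rw [hqdef]; linarith
  have hq0 : (0:ℝ) < q := by linarith
  have hB0 : (4:ℝ) * p - 2 ≠ 0 := by intro h; rw [hqdef] at hq1; nlinarith
  have hA0 : c ^ 2 * p ^ 2 ≠ 0 := by positivity
  -- floor bounds
  have fa_ub : ∀ k : ℕ, (a k : ℝ) ≤ c * (k:ℝ)^p := by
    intro k; rw [ha k]; exact Nat.floor_le (by positivity)
  have fa_lb : ∀ k : ℕ, c * (k:ℝ)^p - 1 < (a k : ℝ) := by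
    intro k; rw [ha k]; exact Nat.sub_one_lt_floor _
  -- increments
  have hDcast : ∀ k, 1 ≤ k → ((a (k+1) - a k : ℕ) : ℝ) = (a (k+1):ℝ) - (a k:ℝ) :=
    fun k hk => Nat.cast_sub (hamono k hk).le
  have fD_lb : ∀ k:ℕ, 1 ≤ k → c*p*(k:ℝ)^(p-1) - 1 ≤ ((a (k+1) - a k : ℕ):ℝ) := by
    intro k hk
    rw [hDcast k hk]
    have h1 := fa_lb (k+1)
    have h2 := fa_ub k
    have h3 : p * (k:ℝ)^(p-1) ≤ ((k:ℝ)+1)^p - (k:ℝ)^p :=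
      wu_tel_lower hp.le (by exact_mod_cast hk)
    have hcast : ((k+1:ℕ):ℝ) = (k:ℝ)+1 := by push_cast; ring
    rw [hcast] at h1
    nlinarith [mul_le_mul_of_nonneg_left h3 hc.le]
  have fD_ub : ∀ k:ℕ, 1 ≤ k → ((a (k+1) - a k : ℕ):ℝ) ≤ c*p*((k:ℝ)+1)^(p-1) + 1 := by
    intro k hk
    rw [hDcast k hk]
    have h1 := fa_ub (k+1)
    have h2 := fa_lb k
    have h3 : ((k:ℝ)+1)^p - (k:ℝ)^p ≤ p * ((k:ℝ)+1)^(p-1) :=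
      wu_tel_upper hp.le (Nat.cast_nonneg k)
    have hcast : ((k+1:ℕ):ℝ) = (k:ℝ)+1 := by push_cast; ring
    rw [hcast] at h1
    nlinarith [mul_le_mul_of_nonneg_left h3 hc.le]
  -- squares of rpow
  have hsq : ∀ x : ℝ, 0 ≤ x → x^(q-1) = (x^(p-1))^2 := by
    intro x hx
    rw [show q - 1 = (p-1) * ((2:ℕ):ℝ) by rw [hqdef]; push_cast; ring,
      Real.rpow_mul hx, Real.rpow_natCast]
  -- termwise bounds
  have hterm_low : ∀ k:ℕ, 1 ≤ k →
      c^2*p^2*(k:ℝ)^(q-1) - c*p*(k:ℝ)^(p-1)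
        ≤ ((a (k+1) - a k : ℕ):ℝ)^2 + ((a (k+1) - a k : ℕ):ℝ) := by
    intro k hk
    set D := ((a (k+1) - a k : ℕ):ℝ) with hD
    have hD0 : 0 ≤ D := Nat.cast_nonneg _
    have hlb := fD_lb k hk
    have hy : (0:ℝ) < c*p*(k:ℝ)^(p-1) := by
      have : (0:ℝ) < (k:ℝ) := by exact_mod_cast hk
      positivity
    have hq' := hsq (k:ℝ) (Nat.cast_nonneg k)
    rw [hq']
    nlinarith [mul_nonneg (by linarith : (0:ℝ) ≤ D - (c*p*(k:ℝ)^(p-1) - 1))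
      (by linarith : (0:ℝ) ≤ D + (c*p*(k:ℝ)^(p-1) - 1) + 1)]
  have hterm_high : ∀ k:ℕ, 1 ≤ k →
      ((a (k+1) - a k : ℕ):ℝ)^2 + ((a (k+1) - a k : ℕ):ℝ)
        ≤ c^2*p^2*((k:ℝ)+1)^(q-1) + 3*(c*p)*((k:ℝ)+1)^(p-1) + 2 := by
    intro k hk
    set D := ((a (k+1) - a k : ℕ):ℝ) with hD
    have hD0 : 0 ≤ D := Nat.cast_nonneg _
    have hub := fD_ub k hk
    have hy : (0:ℝ) < c*p*((k:ℝ)+1)^(p-1) := by positivity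
    have hq' := hsq ((k:ℝ)+1) (by positivity)
    rw [hq']
    nlinarith [mul_nonneg (by linarith : (0:ℝ) ≤ (c*p*((k:ℝ)+1)^(p-1) + 1) - D)
      (by linarith : (0:ℝ) ≤ (c*p*((k:ℝ)+1)^(p-1) + 1) + D + 1)]
  -- block decomposition of v
  have fblock : ∀ m, 1 ≤ m → (v (a (m+1)) : ℝ) = (v (a m) : ℝ)
      + (((a (m+1) - a m : ℕ):ℝ)^2 + ((a (m+1) - a m : ℕ):ℝ))/2 := by
    intro m hm
    have hAB := hamono m hm
    have hsplit : v (a (m+1)) = v (a m) + ∑ i ∈ Ioc (a m) (a (m+1)), (i - t i + 1) := by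
      rw [hv, hv]
      rw [show Finset.Icc 1 (a m) = Finset.Ioc 0 (a m) from by
        ext i; simp [Nat.lt_iff_add_one_le]]
      rw [show Finset.Icc 1 (a (m+1)) = Finset.Ioc 0 (a (m+1)) from by
        ext i; simp [Nat.lt_iff_add_one_le]]
      exact (Finset.sum_Ioc_consecutive _ (Nat.zero_le (a m)) hAB.le).symm
    rw [hsplit, Nat.cast_add, wu_block hAB t (fun i h1 h2 => ht m hm i h1 h2)
      (ht (m+1) (by omega) (a (m+1)) le_rfl (hamono (m+1) (by omega)))]
  -- sum formula
  have fvsum : ∀ m, 1 ≤ m → (v (a m) : ℝ) = (v (a 1) : ℝ)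
      + ∑ k ∈ Ico 1 m, (((a (k+1) - a k : ℕ):ℝ)^2 + ((a (k+1) - a k : ℕ):ℝ))/2 := by
    intro m hm
    induction m, hm using Nat.le_induction with
    | base => simp
    | succ m hm ih =>
      rw [Finset.sum_Ico_succ_top hm, fblock m hm, ih]
      ring
  -- lower and upper bounds for v (a m)
  have hvlow : ∀ m : ℕ, 1 ≤ m → (v (a 1):ℝ)
      + (c^2*p^2 * (∑ k ∈ Ico 1 m, (k:ℝ)^(q-1)) - c*p * (∑ k ∈ Ico 1 m, (k:ℝ)^(p-1)))/2
      ≤ (v (a m):ℝ) := by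
    intro m hm
    rw [fvsum m hm]
    have hs : ∑ k ∈ Ico 1 m, (c^2*p^2*(k:ℝ)^(q-1) - c*p*(k:ℝ)^(p-1))/2
        ≤ ∑ k ∈ Ico 1 m, (((a (k+1) - a k : ℕ):ℝ)^2 + ((a (k+1) - a k : ℕ):ℝ))/2 := by
      apply Finset.sum_le_sum
      intro k hk
      have hk1 : 1 ≤ k := (Finset.mem_Ico.mp hk).1
      have := hterm_low k hk1
      linarith
    have heq : ∑ k ∈ Ico 1 m, (c^2*p^2*(k:ℝ)^(q-1) - c*p*(k:ℝ)^(p-1))/2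
        = (c^2*p^2 * (∑ k ∈ Ico 1 m, (k:ℝ)^(q-1))
            - c*p * (∑ k ∈ Ico 1 m, (k:ℝ)^(p-1)))/2 := by
      rw [← Finset.sum_div, Finset.sum_sub_distrib, ← Finset.mul_sum, ← Finset.mul_sum]
    linarith [heq ▸ hs]
  have hvhigh : ∀ m : ℕ, 1 ≤ m → (v (a m):ℝ) ≤ (v (a 1):ℝ)
      + (c^2*p^2 * ((∑ k ∈ Ico 1 m, (k:ℝ)^(q-1)) + (m:ℝ)^(q-1) - 1)
        + 3*(c*p) * ((∑ k ∈ Ico 1 m, (k:ℝ)^(p-1)) + (m:ℝ)^(p-1) - 1)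
        + 2*((m:ℝ)-1))/2 := by
    intro m hm
    rw [fvsum m hm]
    have hs : ∑ k ∈ Ico 1 m, (((a (k+1) - a k : ℕ):ℝ)^2 + ((a (k+1) - a k : ℕ):ℝ))/2
        ≤ ∑ k ∈ Ico 1 m, (c^2*p^2*((k:ℝ)+1)^(q-1) + 3*(c*p)*((k:ℝ)+1)^(p-1) + 2)/2 := by
      apply Finset.sum_le_sum
      intro k hk
      have hk1 : 1 ≤ k := (Finset.mem_Ico.mp hk).1
      have := hterm_high k hk1
      linarith
    have heq : ∑ k ∈ Ico 1 m, (c^2*p^2*((k:ℝ)+1)^(q-1) + 3*(c*p)*((k:ℝ)+1)^(p-1) + 2)/2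
        = (c^2*p^2 * ((∑ k ∈ Ico 1 m, (k:ℝ)^(q-1)) + (m:ℝ)^(q-1) - 1)
          + 3*(c*p) * ((∑ k ∈ Ico 1 m, (k:ℝ)^(p-1)) + (m:ℝ)^(p-1) - 1)
          + 2*((m:ℝ)-1))/2 := by
      rw [← Finset.sum_div]
      congr 1
      rw [Finset.sum_add_distrib, Finset.sum_add_distrib, ← Finset.mul_sum, ← Finset.mul_sum,
        wu_shift (q-1) hm, wu_shift (p-1) hm, Finset.sum_const, Nat.card_Ico]
      have : ((m - 1 : ℕ):ℝ) = (m:ℝ) - 1 := by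
        rw [Nat.cast_sub hm]; norm_num
      rw [nsmul_eq_mul, this]
      push_cast
      ring
    linarith [heq ▸ hs]
  -- limit machinery
  have T2 : Tendsto (fun m : ℕ => (∑ k ∈ Ico 1 m, (k:ℝ)^(q-1)) / (m:ℝ)^q) atTop
      (nhds (1/q)) := wu_sum_tendsto hq1
  have T1 : Tendsto (fun m : ℕ => (∑ k ∈ Ico 1 m, (k:ℝ)^(p-1)) / (m:ℝ)^q) atTop
      (nhds 0) := wu_sum_small (by linarith) (by rw [hqdef]; linarith)
  have Tq1 : Tendsto (fun m : ℕ => (m:ℝ)^(q-1) / (m:ℝ)^q) atTop (nhds 0) :=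
    wu_pow_ratio_tendsto (by linarith)
  have Tp1 : Tendsto (fun m : ℕ => (m:ℝ)^(p-1) / (m:ℝ)^q) atTop (nhds 0) :=
    wu_pow_ratio_tendsto (by rw [hqdef]; linarith)
  have Tone : Tendsto (fun m : ℕ => 1 / (m:ℝ)^q) atTop (nhds 0) := by
    have := wu_pow_ratio_tendsto (s := 0) (q := q) (by linarith)
    simpa [Real.rpow_zero] using this
  have Tm : Tendsto (fun m : ℕ => (m:ℝ) / (m:ℝ)^q) atTop (nhds 0) := by
    have := wu_pow_ratio_tendsto (s := 1) (q := q) hq1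
    simpa [Real.rpow_one] using this
  have TC : Tendsto (fun m : ℕ => (v (a 1):ℝ) / (m:ℝ)^q) atTop (nhds 0) := by
    have := Tone.const_mul ((v (a 1):ℝ))
    simpa [div_eq_mul_inv] using this
  -- part 1 by squeezing
  have part1 : Tendsto
      (fun m => (v (a m) : ℝ) / ((m : ℝ) ^ q * c ^ 2 * p ^ 2 / (4 * p - 2)))
      atTop (nhds 1) := by
    have hval : ((0:ℝ) + (c^2*p^2 * (1/q) - c*p * 0)/2) * ((4*p-2)/(c^2*p^2)) = 1 := by
      rw [hqdef]
      have h2p : (2:ℝ)*p - 1 ≠ 0 := by nlinarith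
      field_simp [show p*2-1 ≠ 0 by contrapose! h2p; linarith]
      ring
    have hgform : ∀ m : ℕ, (m : ℝ) ^ q * c ^ 2 * p ^ 2 / (4 * p - 2)
        = (m : ℝ) ^ q * (c ^ 2 * p ^ 2) / (4 * p - 2) := by intro m; ring
    have TL : Tendsto (fun m : ℕ => ((v (a 1):ℝ)
        + (c^2*p^2 * (∑ k ∈ Ico 1 m, (k:ℝ)^(q-1)) - c*p * (∑ k ∈ Ico 1 m, (k:ℝ)^(p-1)))/2)
          / ((m : ℝ) ^ q * c ^ 2 * p ^ 2 / (4 * p - 2))) atTop (nhds 1) := by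
      have hT : Tendsto (fun m : ℕ => ((v (a 1):ℝ) / (m:ℝ)^q
          + (c^2*p^2 * ((∑ k ∈ Ico 1 m, (k:ℝ)^(q-1))/(m:ℝ)^q)
            - c*p * ((∑ k ∈ Ico 1 m, (k:ℝ)^(p-1))/(m:ℝ)^q))/2)
            * ((4*p-2)/(c^2*p^2))) atTop
          (nhds (((0:ℝ) + (c^2*p^2 * (1/q) - c*p * 0)/2) * ((4*p-2)/(c^2*p^2)))) :=
        (TC.add (((T2.const_mul _).sub (T1.const_mul _)).div_const 2)).mul_const _
      rw [hval] at hT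
      apply Tendsto.congr _ hT
      intro m
      rw [hgform m, wu_div_helper _ _ _ _ hA0 hB0]
      ring
    have TU : Tendsto (fun m : ℕ => ((v (a 1):ℝ)
        + (c^2*p^2 * ((∑ k ∈ Ico 1 m, (k:ℝ)^(q-1)) + (m:ℝ)^(q-1) - 1)
          + 3*(c*p) * ((∑ k ∈ Ico 1 m, (k:ℝ)^(p-1)) + (m:ℝ)^(p-1) - 1)
          + 2*((m:ℝ)-1))/2)
          / ((m : ℝ) ^ q * c ^ 2 * p ^ 2 / (4 * p - 2))) atTop (nhds 1) := by
      have hval2 : ((0:ℝ) + (c^2*p^2 * (1/q + 0 - 0) + 3*(c*p) * (0 + 0 - 0)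
          + 2*(0 - 0))/2) * ((4*p-2)/(c^2*p^2)) = 1 := by
        rw [hqdef]
        have h2p : (2:ℝ)*p - 1 ≠ 0 := by nlinarith
        field_simp [show p*2-1 ≠ 0 by contrapose! h2p; linarith]
        ring
      have hT : Tendsto (fun m : ℕ => ((v (a 1):ℝ) / (m:ℝ)^q
          + (c^2*p^2 * ((∑ k ∈ Ico 1 m, (k:ℝ)^(q-1))/(m:ℝ)^q + (m:ℝ)^(q-1)/(m:ℝ)^q
              - 1/(m:ℝ)^q)
            + 3*(c*p) * ((∑ k ∈ Ico 1 m, (k:ℝ)^(p-1))/(m:ℝ)^q + (m:ℝ)^(p-1)/(m:ℝ)^q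
              - 1/(m:ℝ)^q)
            + 2*((m:ℝ)/(m:ℝ)^q - 1/(m:ℝ)^q))/2)
            * ((4*p-2)/(c^2*p^2))) atTop
          (nhds (((0:ℝ) + (c^2*p^2 * (1/q + 0 - 0) + 3*(c*p) * (0 + 0 - 0)
            + 2*(0 - 0))/2) * ((4*p-2)/(c^2*p^2)))) :=
        (TC.add ((((((T2.add Tq1).sub Tone).const_mul _).add
          (((T1.add Tp1).sub Tone).const_mul _)).add
          ((Tm.sub Tone).const_mul _)).div_const 2)).mul_const _
      rw [hval2] at hT
      apply Tendsto.congr _ hT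
      intro m
      rw [hgform m, wu_div_helper _ _ _ _ hA0 hB0]
      ring
    apply tendsto_of_tendsto_of_tendsto_of_le_of_le' TL TU
    · filter_upwards [eventually_ge_atTop 1] with m hm
      have hm0 : (0:ℝ) < m := by exact_mod_cast hm
      have hg : (0:ℝ) < (m : ℝ) ^ q * c ^ 2 * p ^ 2 / (4 * p - 2) := by
        have : (0:ℝ) < 4*p - 2 := by nlinarith
        have hmq : (0:ℝ) < (m:ℝ)^q := Real.rpow_pos_of_pos hm0 q
        positivity
      exact div_le_div_of_nonneg_right (hvlow m hm) hg.le |>.trans_eq rfl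
    · filter_upwards [eventually_ge_atTop 1] with m hm
      have hm0 : (0:ℝ) < m := by exact_mod_cast hm
      have hg : (0:ℝ) < (m : ℝ) ^ q * c ^ 2 * p ^ 2 / (4 * p - 2) := by
        have : (0:ℝ) < 4*p - 2 := by nlinarith
        have hmq : (0:ℝ) < (m:ℝ)^q := Real.rpow_pos_of_pos hm0 q
        positivity
      exact div_le_div_of_nonneg_right (hvhigh m hm) hg.le |>.trans_eq rfl
  refine ⟨part1, ?_⟩
  -- part 2
  have amono_le : ∀ k l : ℕ, 1 ≤ k → k ≤ l → a k ≤ a l := by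
    intro k l hk hkl
    induction l with
    | zero => omega
    | succ l ih =>
      rcases Nat.eq_or_lt_of_le hkl with h|h
      · rw [h]
      · have hkl' : k ≤ l := by omega
        have hl1 : 1 ≤ l := by omega
        exact (ih hkl').trans (hamono l hl1).le
  have hmn_top : Tendsto mn atTop atTop := by
    rw [tendsto_atTop]
    intro M
    have hK1 : 1 ≤ max M 1 := le_max_right _ _
    have ha1K : a 1 ≤ a (max M 1) := amono_le 1 (max M 1) le_rfl hK1
    filter_upwards [eventually_ge_atTop (a (max M 1))] with n hn
    have hn1 : a 1 ≤ n := le_trans ha1K hn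
    obtain ⟨h1, h2, h3⟩ := hmn n hn1
    have hKmn : max M 1 ≤ mn n := by
      by_contra hcon
      push_neg at hcon
      have : a (mn n + 1) ≤ a (max M 1) := amono_le (mn n + 1) (max M 1) (by omega) (by omega)
      omega
    exact le_trans (le_max_left M 1) hKmn
  have hg_pos : ∀ m : ℕ, 1 ≤ m → (0:ℝ) < (m:ℝ)^q * c^2 * p^2 / (4*p-2) := by
    intro m hm
    have hm0 : (0:ℝ) < m := by exact_mod_cast hm
    have h4 : (0:ℝ) < 4*p-2 := by nlinarith
    have hmq := Real.rpow_pos_of_pos hm0 q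
    positivity
  have hvpos : ∀ᶠ m : ℕ in atTop, 0 < v (a m) := by
    have h12 := part1.eventually (eventually_gt_nhds (by norm_num : (1:ℝ)/2 < 1))
    filter_upwards [h12, eventually_ge_atTop 1] with m hm2 hm1
    by_contra hcon
    push_neg at hcon
    have hz : v (a m) = 0 := by omega
    rw [hz] at hm2
    norm_num at hm2
  have hvmono : ∀ n n' : ℕ, n ≤ n' → v n ≤ v n' := by
    intro n n' h
    rw [hv, hv]
    exact Finset.sum_le_sum_of_subset (Finset.Icc_subset_Icc_right h)
  have hφr : Tendsto (fun m : ℕ => ((m+1:ℕ):ℝ)^q / (m:ℝ)^q) atTop (nhds 1) := by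
    have hb : Tendsto (fun m : ℕ => 1 + 1/(m:ℝ)) atTop (nhds 1) := by
      have := tendsto_const_nhds (x := (1:ℝ)) (f := atTop (α := ℕ)) |>.add
        tendsto_one_div_atTop_nhds_zero_nat
      simpa using this
    have hb2 := hb.rpow_const (p := q) (Or.inl one_ne_zero)
    rw [Real.one_rpow] at hb2
    refine Tendsto.congr' ?_ hb2
    filter_upwards [eventually_ge_atTop 1] with m hm
    have hm0 : (0:ℝ) < m := by exact_mod_cast hm
    rw [← Real.div_rpow (by positivity) hm0.le]
    congr 1
    push_cast
    field_simp
  have hgr : Tendsto (fun m : ℕ => ((m+1:ℕ):ℝ)^q * c^2 * p^2 / (4*p-2)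
      / ((m:ℝ)^q * c^2 * p^2 / (4*p-2))) atTop (nhds 1) := by
    apply Tendsto.congr _ hφr
    intro m
    rcases eq_or_ne ((m:ℝ)^q) 0 with h|h
    · rw [h]; norm_num
    · have hcp : c ≠ 0 := hc.ne'
      have hpp : p ≠ 0 := hp0.ne'
      field_simp [show p*4-2 ≠ 0 by contrapose! hB0; linarith]
  have hshift : Tendsto (fun m : ℕ => (v (a (m+1)):ℝ)
      / (((m+1:ℕ):ℝ)^q * c^2 * p^2 / (4*p-2))) atTop (nhds 1) := by
    have := part1.comp (tendsto_add_atTop_nat 1)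
    exact this
  have hrat : Tendsto (fun m : ℕ => (v (a (m+1)):ℝ) / (v (a m):ℝ)) atTop (nhds 1) := by
    have hmain := (hshift.div part1 one_ne_zero).mul hgr
    norm_num at hmain
    apply Tendsto.congr' _ hmain
    filter_upwards [eventually_ge_atTop 1] with m hm
    have hg1 : ((m:ℝ)^q * c^2 * p^2 / (4*p-2)) ≠ 0 := (hg_pos m hm).ne'
    have hg2 : (((m+1:ℕ):ℝ)^q * c^2 * p^2 / (4*p-2)) ≠ 0 := by
      have := hg_pos (m+1) (by omega)
      push_cast at this ⊢
      exact this.ne'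
    rcases eq_or_ne ((v (a m):ℝ)) 0 with h|h
    · simp [h]
    · field_simp [show p*4-2 ≠ 0 by contrapose! hB0; linarith]
  have hcomp : Tendsto (fun n : ℕ => (v (a (mn n + 1)):ℝ) / (v (a (mn n)):ℝ)) atTop
      (nhds 1) := hrat.comp hmn_top
  apply tendsto_of_tendsto_of_tendsto_of_le_of_le'
    (tendsto_const_nhds : Tendsto (fun _ : ℕ => (1:ℝ)) atTop (nhds 1)) hcomp
  · filter_upwards [eventually_ge_atTop (a 1), hmn_top.eventually hvpos] with n hn hpos
    obtain ⟨h1, h2, h3⟩ := hmn n hn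
    have hd : (0:ℝ) < (v (a (mn n)):ℝ) := by exact_mod_cast hpos
    rw [le_div_iff₀ hd, one_mul]
    exact_mod_cast hvmono _ _ h2
  · filter_upwards [eventually_ge_atTop (a 1), hmn_top.eventually hvpos] with n hn hpos
    obtain ⟨h1, h2, h3⟩ := hmn n hn
    have hd : (0:ℝ) < (v (a (mn n)):ℝ) := by exact_mod_cast hpos
    have hnum : v n ≤ v (a (mn n + 1)) := hvmono _ _ h3.le
    exact div_le_div_of_nonneg_right (by exact_mod_cast hnum) hd.le
end

section
/- Let (a_k)_{k≥1} be a strictly increasing integer sequence with a_1 = 1 such that a_{k+1} − a_k → ∞ as k → ∞, and let (ρ_k)_{k≥1} be a sequence of nonnegative reals with ρ_k → 0. Then lim_{n→∞} (1/v_n) ∑_{i=1}^n (i − t_i + 1) ρ_{i − t_i + 1} = 0. -/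
open Filter

/-- **Display (34) of Wu (2009), deterministic core**: if `a_{k+1} - a_k → ∞` and
`ρ_k → 0` with `ρ_k ≥ 0`, then `(1/v_n) ∑_{i=1}^n (i - t_i + 1) ρ_{i - t_i + 1} → 0`. -/
theorem weighted_block_average_tendsto_zero
    (a : ℕ → ℕ) (ha1 : a 1 = 1) (hamono : ∀ k, 1 ≤ k → a k < a (k + 1))
    (hgap : Tendsto (fun k => a (k + 1) - a k) atTop atTop)
    (t : ℕ → ℕ) (ht : ∀ k, 1 ≤ k → ∀ i, a k ≤ i → i < a (k + 1) → t i = a k)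
    (v : ℕ → ℕ) (hv : ∀ n, v n = ∑ i ∈ Finset.Icc 1 n, (i - t i + 1))
    (ρ : ℕ → ℝ) (hρ0 : ∀ k, 0 ≤ ρ k) (hρ : Tendsto ρ atTop (nhds 0)) :
    Tendsto
      (fun n => (∑ i ∈ Finset.Icc 1 n, ((i - t i + 1 : ℕ) : ℝ) * ρ (i - t i + 1)) / v n)
      atTop (nhds 0) := by
  -- monotonicity facts
  have hmono : ∀ k m, 1 ≤ k → k ≤ m → a k ≤ a m := by
    intro k m hk hkm
    induction m with
    | zero => omega
    | succ m ih =>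
      rcases Nat.lt_or_ge k (m+1) with h | h
      · have h1 : k ≤ m := by omega
        exact le_trans (ih h1) (le_of_lt (hamono m (by omega)))
      · have : k = m + 1 := by omega
        simp [this]
  have hge : ∀ k, 1 ≤ k → k ≤ a k := by
    intro k hk
    induction k with
    | zero => omega
    | succ k ih =>
      rcases Nat.lt_or_ge 0 k with h | h
      · have := hamono k h; have := ih h; omega
      · have : k = 0 := by omega
        simp [this, ha1]
  -- block index
  set K : ℕ → ℕ := fun i => Nat.findGreatest (fun k => 1 ≤ k ∧ a k ≤ i) i with hK
  have hK1 : ∀ i, 1 ≤ i → 1 ≤ K i := by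
    intro i hi
    exact Nat.le_findGreatest hi ⟨le_refl 1, by omega⟩
  have hKa : ∀ i, 1 ≤ i → a (K i) ≤ i := by
    intro i hi
    exact (Nat.findGreatest_spec (P := fun k => 1 ≤ k ∧ a k ≤ i) hi ⟨le_refl 1, by omega⟩).2
  have hKtop : ∀ i, 1 ≤ i → i < a (K i + 1) := by
    intro i hi
    rcases Nat.lt_or_ge i (K i + 1) with h | h
    · exact lt_of_lt_of_le h (hge _ (by omega))
    · by_contra hcon
      push_neg at hcon
      exact Nat.findGreatest_is_greatest (Nat.lt_succ_self _) h ⟨by omega, hcon⟩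
  have htK : ∀ i, 1 ≤ i → t i = a (K i) := by
    intro i hi
    exact ht (K i) (hK1 i hi) i (hKa i hi) (hKtop i hi)
  have hKmono : ∀ i n, 1 ≤ i → i ≤ n → K i ≤ K n := by
    intro i n hi hin
    exact Nat.le_findGreatest (le_trans (Nat.findGreatest_le i) hin)
      ⟨hK1 i hi, le_trans (hKa i hi) hin⟩
  have hKtend : Tendsto K atTop atTop := by
    rw [tendsto_atTop_atTop]
    intro b
    refine ⟨a (b + 1), fun n hn => ?_⟩
    have hb1 : 1 ≤ b + 1 := by omega
    have h1 : 1 ≤ a (b+1) := le_trans hb1 (hge _ hb1)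
    have : b + 1 ≤ K n := Nat.le_findGreatest (le_trans (hge _ hb1) hn) ⟨hb1, hn⟩
    omega
  -- bound on ρ
  obtain ⟨C0, hC0⟩ := hρ.bddAbove_range
  set C : ℝ := max C0 1 with hCdef
  have hC1 : (1:ℝ) ≤ C := le_max_right _ _
  have hC : ∀ k, ρ k ≤ C := fun k =>
    le_trans (hC0 (Set.mem_range_self k)) (le_max_left _ _)
  rw [NormedAddCommGroup.tendsto_nhds_zero]
  intro ε hε
  -- choose N with ρ m ≤ ε/4 for m ≥ N
  obtain ⟨N0, hN0⟩ := (hρ.eventually_le_const (by linarith : (0:ℝ) < ε/4)).exists_forall_of_atTop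
  set N : ℕ := max N0 1 with hNdef
  have hN1 : 1 ≤ N := le_max_right _ _
  have hN : ∀ m, N ≤ m → ρ m ≤ ε / 4 := fun m hm => hN0 m (le_trans (le_max_left _ _) hm)
  -- choose M
  set M : ℕ := max ⌈8 * (N:ℝ)^2 * C / ε⌉₊ 1 with hMdef
  have hM1 : 1 ≤ M := le_max_right _ _
  have hMge : 8 * (N:ℝ)^2 * C / ε ≤ M := by
    rw [hMdef]
    refine le_trans (Nat.le_ceil _) ?_
    exact_mod_cast le_max_left _ _
  -- choose k0 with gaps ≥ M beyond k0
  obtain ⟨k1, hk1⟩ := (hgap.eventually_ge_atTop M).exists_forall_of_atTop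
  set k0 : ℕ := max k1 1 with hk0def
  have hk01 : 1 ≤ k0 := le_max_right _ _
  have hk0 : ∀ k, k0 ≤ k → M ≤ a (k+1) - a k := fun k hk =>
    hk1 k (le_trans (le_max_left _ _) hk)
  -- eventual conditions
  have hev : ∀ᶠ n in atTop, 1 ≤ n ∧ 2 * k0 ≤ K n := by
    filter_upwards [eventually_ge_atTop 1, hKtend.eventually_ge_atTop (2*k0)] with n h1 h2
    exact ⟨h1, h2⟩
  filter_upwards [hev] with n hn
  obtain ⟨hn1, hnK⟩ := hn
  -- abbreviations
  set l : ℕ → ℕ := fun i => i - t i + 1 with hl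
  have hl1 : ∀ i, 1 ≤ l i := fun i => by simp [hl]
  -- Step B : lower bound on v n
  have hvlb : (M * (K n - k0) : ℕ) ≤ v n := by
    rw [hv]
    have hsub : (Finset.Ico k0 (K n)).image (fun k => a (k+1) - 1) ⊆ Finset.Icc 1 n := by
      intro i hi
      simp only [Finset.mem_image, Finset.mem_Ico] at hi
      obtain ⟨k, ⟨hk0k, hkK⟩, rfl⟩ := hi
      have h1k : 1 ≤ k := le_trans hk01 hk0k
      have hlt : a k < a (k+1) := hamono k h1k
      have hak : 1 ≤ a k := le_trans h1k (hge k h1k)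
      have hle : a (k+1) ≤ a (K n) := hmono (k+1) (K n) (by omega) (by omega)
      have han : a (K n) ≤ n := hKa n hn1
      simp only [Finset.mem_Icc]
      omega
    calc (M * (K n - k0) : ℕ)
        = ∑ k ∈ Finset.Ico k0 (K n), M := by
          rw [Finset.sum_const, Nat.card_Ico]; ring
      _ ≤ ∑ k ∈ Finset.Ico k0 (K n), (a (k+1) - 1 - t (a (k+1) - 1) + 1) := by
          refine Finset.sum_le_sum fun k hk => ?_
          simp only [Finset.mem_Ico] at hk
          have h1k : 1 ≤ k := le_trans hk01 hk.1
          have hlt : a k < a (k+1) := hamono k h1k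
          have hteq : t (a (k+1) - 1) = a k := ht k h1k _ (by omega) (by omega)
          have := hk0 k hk.1
          omega
      _ = ∑ i ∈ (Finset.Ico k0 (K n)).image (fun k => a (k+1) - 1),
            (i - t i + 1) := by
          rw [Finset.sum_image]
          intro x hx y hy hxy
          simp only [Finset.mem_coe, Finset.mem_Ico] at hx hy hxy
          have h1x : 1 ≤ x := le_trans hk01 hx.1
          have h1y : 1 ≤ y := le_trans hk01 hy.1
          by_contra hne
          rcases Nat.lt_or_ge x y with h | h
          · have := hmono (x+1) y (by omega) (by omega)
            have := hamono y h1y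
            have := hamono x h1x
            omega
          · have hxy' : y < x := by omega
            have := hmono (y+1) x (by omega) (by omega)
            have := hamono x h1x
            have := hamono y h1y
            omega
      _ ≤ ∑ i ∈ Finset.Icc 1 n, (i - t i + 1) :=
          Finset.sum_le_sum_of_subset hsub
  have hKn1 : 1 ≤ K n := hK1 n hn1
  have hvpos : 0 < v n := lt_of_lt_of_le (Nat.mul_pos (by omega) (by omega)) hvlb
  have hvpos' : (0:ℝ) < (v n : ℝ) := by exact_mod_cast hvpos
  -- Step A : numerator bound
  set F : Finset ℕ := (Finset.Icc 1 n).filter (fun i => i - t i + 1 < N) with hF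
  have hcardF : F.card ≤ K n * N := by
    have hsub : F ⊆ (Finset.Icc 1 (K n)).biUnion (fun k => Finset.Ico (a k) (a k + N)) := by
      intro i hi
      simp only [hF, Finset.mem_filter, Finset.mem_Icc] at hi
      obtain ⟨⟨hi1, hin⟩, hiN⟩ := hi
      rw [Finset.mem_biUnion]
      refine ⟨K i, ?_, ?_⟩
      · simp only [Finset.mem_Icc]
        exact ⟨hK1 i hi1, hKmono i n hi1 hin⟩
      · simp only [Finset.mem_Ico]
        have h1 : a (K i) ≤ i := hKa i hi1
        have h2 : t i = a (K i) := htK i hi1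
        omega
    calc F.card ≤ _ := Finset.card_le_card hsub
      _ ≤ ∑ k ∈ Finset.Icc 1 (K n), (Finset.Ico (a k) (a k + N)).card :=
          Finset.card_biUnion_le
      _ = ∑ k ∈ Finset.Icc 1 (K n), N := by
          refine Finset.sum_congr rfl fun k _ => ?_
          rw [Nat.card_Ico]; omega
      _ = K n * N := by rw [Finset.sum_const, Nat.card_Icc]; simp [Nat.mul_comm]
  set S : ℝ := ∑ i ∈ Finset.Icc 1 n, ((i - t i + 1 : ℕ) : ℝ) * ρ (i - t i + 1) with hS
  have hvcast : (v n : ℝ) = ∑ i ∈ Finset.Icc 1 n, ((i - t i + 1 : ℕ) : ℝ) := by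
    rw [hv, hl]; push_cast; ring
  have hbound1 : ∑ i ∈ F, ((i - t i + 1 : ℕ) : ℝ) * ρ (i - t i + 1)
      ≤ (K n : ℝ) * N ^ 2 * C := by
    calc ∑ i ∈ F, ((i - t i + 1 : ℕ) : ℝ) * ρ (i - t i + 1)
        ≤ ∑ i ∈ F, (N : ℝ) * C := by
          refine Finset.sum_le_sum fun i hi => ?_
          simp only [hF, Finset.mem_filter] at hi
          refine mul_le_mul ?_ (hC _) (hρ0 _) (by positivity)
          exact_mod_cast Nat.le_of_lt hi.2
      _ = (F.card : ℝ) * ((N:ℝ) * C) := by rw [Finset.sum_const]; simp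
      _ ≤ ((K n * N : ℕ) : ℝ) * ((N:ℝ) * C) := by
          refine mul_le_mul_of_nonneg_right ?_ (by positivity)
          exact_mod_cast hcardF
      _ = (K n : ℝ) * N ^ 2 * C := by push_cast; ring
  have hbound2 : ∑ i ∈ (Finset.Icc 1 n).filter (fun i => ¬ (i - t i + 1 < N)),
      ((i - t i + 1 : ℕ) : ℝ) * ρ (i - t i + 1) ≤ ε / 4 * (v n : ℝ) := by
    calc ∑ i ∈ (Finset.Icc 1 n).filter (fun i => ¬ (i - t i + 1 < N)),
        ((i - t i + 1 : ℕ) : ℝ) * ρ (i - t i + 1)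
        ≤ ∑ i ∈ (Finset.Icc 1 n).filter (fun i => ¬ (i - t i + 1 < N)),
            ((i - t i + 1 : ℕ) : ℝ) * (ε/4) := by
          refine Finset.sum_le_sum fun i hi => ?_
          simp only [Finset.mem_filter, not_lt] at hi
          exact mul_le_mul_of_nonneg_left (hN _ hi.2) (by positivity)
      _ ≤ ∑ i ∈ Finset.Icc 1 n, ((i - t i + 1 : ℕ) : ℝ) * (ε/4) := by
          refine Finset.sum_le_sum_of_subset_of_nonneg (Finset.filter_subset _ _)
            fun i _ _ => by positivity
      _ = ε / 4 * (v n : ℝ) := by rw [← Finset.sum_mul, ← hvcast]; ring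
  have hSsplit : S ≤ (K n : ℝ) * N ^ 2 * C + ε / 4 * (v n : ℝ) := by
    rw [hS, ← Finset.sum_filter_add_sum_filter_not (Finset.Icc 1 n)
      (fun i => i - t i + 1 < N)]
    exact add_le_add hbound1 hbound2
  -- Step C : K n * N^2 * C ≤ ε/4 * v n
  have hvlb' : (M : ℝ) * ((K n : ℝ) - (k0 : ℝ)) ≤ (v n : ℝ) := by
    have h1 : ((M * (K n - k0) : ℕ) : ℝ) ≤ (v n : ℝ) := by exact_mod_cast hvlb
    have h2 : ((K n - k0 : ℕ) : ℝ) = (K n : ℝ) - (k0 : ℝ) := by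
      have : k0 ≤ K n := by omega
      push_cast [this]; ring
    rw [Nat.cast_mul, h2] at h1
    exact h1
  have hKhalf : (K n : ℝ) / 2 ≤ (K n : ℝ) - (k0 : ℝ) := by
    have : (2 * k0 : ℝ) ≤ (K n : ℝ) := by exact_mod_cast hnK
    linarith
  have hstep : 8 * (N:ℝ)^2 * C / ε * ((K n : ℝ) / 2) ≤ (v n : ℝ) := by
    calc 8 * (N:ℝ)^2 * C / ε * ((K n : ℝ) / 2)
        ≤ (M : ℝ) * ((K n : ℝ) / 2) :=
          mul_le_mul_of_nonneg_right hMge (by positivity)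
      _ ≤ (M : ℝ) * ((K n : ℝ) - (k0 : ℝ)) :=
          mul_le_mul_of_nonneg_left hKhalf (by positivity)
      _ ≤ (v n : ℝ) := hvlb'
  have hC2 : (K n : ℝ) * N ^ 2 * C ≤ ε / 4 * (v n : ℝ) := by
    have heq : (K n : ℝ) * N ^ 2 * C = ε / 4 * (8 * (N:ℝ)^2 * C / ε * ((K n : ℝ) / 2)) := by
      field_simp
      ring
    rw [heq]
    exact mul_le_mul_of_nonneg_left hstep (by positivity)
  have hSfin : S ≤ ε / 2 * (v n : ℝ) := by linarith
  have hSnonneg : 0 ≤ S := by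
    rw [hS]
    exact Finset.sum_nonneg fun i _ => mul_nonneg (by positivity) (hρ0 _)
  rw [Real.norm_of_nonneg (div_nonneg hSnonneg hvpos'.le)]
  rw [div_lt_iff₀ hvpos']
  nlinarith
end
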